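/- Let R be an associative ring, let C ∈ R, and define δ : R → R by δ(F) := [F, C] = FC − CF. Then for all F, B ∈ R and every integer n ≥ 1: [F, B·Cⁿ] = Σ_{i=1}^{n} binom(n, i)·(−1)^{i−1}·B·δ^{i}(F)·C^{n−i} + [F, B]·Cⁿ, where δ^{i} denotes the i-fold iterate of δ. -/

import Mathlib

open Finset in
theorem key7 {R : Type*} [Ring R] (C F : R) (n : ℕ) :
    C ^ n * F = ∑ i ∈ Finset.range (n+1),
      (((-1 : ℤ) ^ i * (n.choose i : ℤ)) • ((fun X => X * C - C * X)^[i] F * C ^ (n - i))) := by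
  set d : R → R := fun X => X * C - C * X with hd
  induction n with
  | zero => simp
  | succ n ih =>
    have hstep : ∀ i, C * (d^[i] F * C ^ (n - i)) =
        d^[i] F * (C * C ^ (n-i)) - d^[i+1] F * C ^ (n-i) := by
      intro i
      rw [Function.iterate_succ_apply']
      simp only [hd]
      noncomm_ring
    have hLHS : C ^ (n+1) * F =
        ∑ i ∈ Finset.range (n+1), (((-1 : ℤ) ^ i * (n.choose i : ℤ)) •
          (d^[i] F * C ^ (n + 1 - i)))
        - ∑ i ∈ Finset.range (n+1), (((-1 : ℤ) ^ i * (n.choose i : ℤ)) •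
          (d^[i+1] F * C ^ (n - i))) := by
      rw [pow_succ', mul_assoc, ih, Finset.mul_sum, ← Finset.sum_sub_distrib]
      refine Finset.sum_congr rfl fun i hi => ?_
      rw [Finset.mem_range] at hi
      rw [mul_smul_comm, hstep i, smul_sub, ← pow_succ']
      have : n - i + 1 = n + 1 - i := by omega
      rw [this]
    have e1 : ∀ i ∈ Finset.range (n+1),
        (((-1 : ℤ) ^ (i+1) * (((n+1).choose (i+1)) : ℤ)) • (d^[i+1] F * C ^ (n - i)))
        = (((-1 : ℤ) ^ (i+1) * ((n.choose (i+1)) : ℤ)) • (d^[i+1] F * C ^ (n - i)))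
          - (((-1 : ℤ) ^ i * ((n.choose i) : ℤ)) • (d^[i+1] F * C ^ (n - i))) := by
      intro i hi
      rw [Nat.choose_succ_succ n i]
      push_cast
      rw [mul_add, add_smul, pow_succ]
      have : ((-1 : ℤ) ^ i * -1 * (n.choose i : ℤ)) • (d^[i+1] F * C ^ (n - i))
          = -(((-1 : ℤ) ^ i * (n.choose i : ℤ)) • (d^[i+1] F * C ^ (n - i))) := by
        rw [← neg_smul]; ring_nf
      rw [this]
      abel
    have e2 : ∑ i ∈ Finset.range (n+1), (((-1 : ℤ) ^ (i+1) * ((n.choose (i+1)) : ℤ)) •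
          (d^[i+1] F * C ^ (n - i)))
        + F * C ^ (n+1)
        = ∑ i ∈ Finset.range (n+1), (((-1 : ℤ) ^ i * ((n.choose i) : ℤ)) •
          (d^[i] F * C ^ (n + 1 - i))) := by
      rw [Finset.sum_range_succ' (fun i => (((-1 : ℤ) ^ i * ((n.choose i) : ℤ)) •
        (d^[i] F * C ^ (n + 1 - i)))) n]
      rw [Finset.sum_range_succ]
      simp only [Nat.choose_succ_self, Nat.cast_zero, mul_zero, zero_smul, add_zero,
        Nat.choose_zero_right, Nat.cast_one, mul_one, pow_zero, one_smul,
        Function.iterate_zero_apply, Nat.sub_zero]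
      congr 1
      refine Finset.sum_congr rfl fun i hi => ?_
      rw [Finset.mem_range] at hi
      have h9 : n + 1 - (i+1) = n - i := by omega
      rw [h9]
    have etop : ∑ i ∈ Finset.range (n+2), (((-1 : ℤ) ^ i * ((n+1).choose i : ℤ)) •
          (d^[i] F * C ^ (n + 1 - i)))
        = (∑ i ∈ Finset.range (n+1), (((-1 : ℤ) ^ (i+1) * (((n+1).choose (i+1)) : ℤ)) •
          (d^[i+1] F * C ^ (n - i)))) + F * C ^ (n+1) := by
      rw [Finset.sum_range_succ' (fun i => (((-1 : ℤ) ^ i * (((n+1)).choose i : ℤ)) •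
        (d^[i] F * C ^ (n + 1 - i)))) (n+1)]
      simp only [Nat.choose_zero_right, Nat.cast_one, mul_one, pow_zero, one_smul,
        Function.iterate_zero_apply, Nat.sub_zero]
      congr 1
      refine Finset.sum_congr rfl fun i hi => ?_
      rw [Finset.mem_range] at hi
      have h9 : n + 1 - (i+1) = n - i := by omega
      rw [h9]
    rw [hLHS, etop, Finset.sum_congr rfl e1, Finset.sum_sub_distrib, ← e2]
    abel

/-- With δ(F) := [F, C], for every n ≥ 1:
[F, B·Cⁿ] = Σ_{i=1}^{n} binom(n,i)·(−1)^{i−1}·B·δⁱ(F)·C^{n−i} + [F, B]·Cⁿ. -/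
theorem stmt_7 {R : Type*} [Ring R] (C F B : R) (n : ℕ) (hn : 1 ≤ n) :
    F * (B * C ^ n) - (B * C ^ n) * F =
      (∑ i ∈ Finset.Icc 1 n,
        (((-1 : ℤ) ^ (i - 1) * (n.choose i : ℤ)) •
          (B * (fun X => X * C - C * X)^[i] F * C ^ (n - i)))) +
      (F * B - B * F) * C ^ n := by
  set d : R → R := fun X => X * C - C * X with hd
  have hkey : C ^ n * F = F * C ^ n + ∑ i ∈ Finset.Icc 1 n,
      (((-1 : ℤ) ^ i * (n.choose i : ℤ)) • (d^[i] F * C ^ (n - i))) := by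
    rw [key7 C F n, Finset.range_eq_Ico,
      Finset.sum_eq_sum_Ico_succ_bot (Nat.succ_pos n), Nat.succ_eq_add_one, Finset.Ico_add_one_right_eq_Icc]
    simp [hd]
  have expand : F * (B * C ^ n) - (B * C ^ n) * F =
      B * (F * C ^ n - C ^ n * F) + (F * B - B * F) * C ^ n := by noncomm_ring
  rw [expand, hkey]
  congr 1
  rw [sub_add_cancel_left, mul_neg, Finset.mul_sum, ← Finset.sum_neg_distrib]
  refine Finset.sum_congr rfl fun i hi => ?_
  rw [Finset.mem_Icc] at hi
  rw [mul_smul_comm, ← neg_smul, ← mul_assoc]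
  congr 1
  obtain ⟨j, rfl⟩ : ∃ j, i = j + 1 := ⟨i - 1, by omega⟩
  simp [pow_succ]
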